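/- Gronwall inequality of Volterra type: Let f ∈ L¹_loc(ℝ₊; ℝ₊) and T > 0. Suppose that for some γ, β ∈ [0,1) and constants C₁, C₂ > 0, f(t) ≤ C₁ t^{-β} + C₂ ∫₀^t (t-s)^{-γ} f(s) ds for all t ∈ (0,T]. Then there exists a constant C₃ = C₃(C₂, T, γ, β) > 0 such that f(t) ≤ C₃ C₁ t^{-β} for all t ∈ (0,T]. -/

import Mathlib

open MeasureTheory Set
open scoped ENNReal

lemma L0 {a b q : ℝ} (hq : -1 < q) (hab : a ≤ b) :
    ∫⁻ s in Ioc a b, ENNReal.ofReal ((s - a) ^ q) = ENNReal.ofReal ((b - a) ^ (q + 1) / (q + 1)) := by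
  have hII : IntervalIntegrable (fun s : ℝ => (s - a) ^ q) volume a b := by
    have := (intervalIntegral.intervalIntegrable_rpow' (a := a - a) (b := b - a) hq).comp_sub_right a
    simpa using this
  have hnn : 0 ≤ᵐ[volume.restrict (Ioc a b)] fun s : ℝ => (s - a) ^ q := by
    filter_upwards [ae_restrict_mem measurableSet_Ioc] with s hs
    exact Real.rpow_nonneg (by linarith [hs.1]) _
  rw [← ofReal_integral_eq_lintegral_ofReal hII.1 hnn]
  congr 1
  rw [← intervalIntegral.integral_of_le hab, intervalIntegral.integral_comp_sub_right (fun x => x ^ q) a]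
  simp only [sub_self]
  rw [integral_rpow (Or.inl hq)]
  rw [Real.zero_rpow (by linarith)]
  ring

lemma L0' {a b p : ℝ} (hp : -1 < p) (hab : a ≤ b) :
    ∫⁻ s in Ioc a b, ENNReal.ofReal ((b - s) ^ p) = ENNReal.ofReal ((b - a) ^ (p + 1) / (p + 1)) := by
  have hII : IntervalIntegrable (fun s : ℝ => (b - s) ^ p) volume a b := by
    have := ((intervalIntegral.intervalIntegrable_rpow' (a := b - b) (b := b - a) hp).comp_sub_left b)
    simpa using this.symm
  have hnn : 0 ≤ᵐ[volume.restrict (Ioc a b)] fun s : ℝ => (b - s) ^ p := by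
    filter_upwards [ae_restrict_mem measurableSet_Ioc] with s hs
    exact Real.rpow_nonneg (by linarith [hs.2]) _
  rw [← ofReal_integral_eq_lintegral_ofReal hII.1 hnn]
  congr 1
  rw [← intervalIntegral.integral_of_le hab, intervalIntegral.integral_comp_sub_left (fun x => x ^ p) b]
  simp only [sub_self]
  rw [integral_rpow (Or.inl hp), Real.zero_rpow (by linarith)]
  ring

noncomputable def Cpq (p q : ℝ) : ℝ :=
  max 1 (2 ^ (-p)) / (q + 1) + max 1 (2 ^ (-q)) / (p + 1)

lemma Cpq_pos {p q : ℝ} (hp : -1 < p) (hq : -1 < q) : 0 < Cpq p q := by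
  have h1 : (0:ℝ) < max 1 (2 ^ (-p)) / (q + 1) :=
    div_pos (lt_of_lt_of_le one_pos (le_max_left _ _)) (by linarith)
  have h2 : (0:ℝ) < max 1 (2 ^ (-q)) / (p + 1) :=
    div_pos (lt_of_lt_of_le one_pos (le_max_left _ _)) (by linarith)
  unfold Cpq; linarith

lemma half_bound {p d x : ℝ} (hd : 0 < d) (hx1 : d / 2 ≤ x) (hx2 : x ≤ d) :
    x ^ p ≤ d ^ p * max 1 (2 ^ (-p)) := by
  have hx0 : 0 < x := lt_of_lt_of_le (by linarith) hx1
  rcases le_or_gt 0 p with hp0 | hp0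
  · calc x ^ p ≤ d ^ p := Real.rpow_le_rpow hx0.le hx2 hp0
    _ ≤ d ^ p * max 1 (2 ^ (-p)) :=
      le_mul_of_one_le_right (Real.rpow_nonneg hd.le _) (le_max_left _ _)
  · have h1 : x ^ p ≤ (d / 2) ^ p :=
      Real.rpow_le_rpow_of_nonpos (by linarith) hx1 hp0.le
    have h2 : (d / 2 : ℝ) ^ p = d ^ p * 2 ^ (-p) := by
      rw [Real.div_rpow hd.le (by norm_num), Real.rpow_neg (by norm_num)]
      ring
    calc x ^ p ≤ d ^ p * 2 ^ (-p) := by rw [← h2]; exact h1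
    _ ≤ d ^ p * max 1 (2 ^ (-p)) :=
      mul_le_mul_of_nonneg_left (le_max_right _ _) (Real.rpow_nonneg hd.le _)

lemma L1 {p q r t : ℝ} (hp : -1 < p) (hq : -1 < q) (hrt : r < t) :
    ∫⁻ s in Ioc r t, ENNReal.ofReal ((t - s) ^ p * (s - r) ^ q)
      ≤ ENNReal.ofReal (Cpq p q * (t - r) ^ (p + q + 1)) := by
  set m : ℝ := (r + t) / 2 with hm
  set d : ℝ := t - r with hdd
  have hd : 0 < d := by simp [hdd]; linarith
  have hrm : r < m := by simp [hm]; linarith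
  have hmt : m < t := by simp [hm]; linarith
  have e : d ^ (p + q + 1) = d ^ p * d ^ (q + 1) := by
    rw [show p + q + 1 = p + (q + 1) by ring, Real.rpow_add hd]
  have hsplit : Ioc r t = Ioc r m ∪ Ioc m t := (Set.Ioc_union_Ioc_eq_Ioc hrm.le hmt.le).symm
  rw [hsplit, lintegral_union measurableSet_Ioc (Set.Ioc_disjoint_Ioc_of_le le_rfl)]
  have piece1 : ∫⁻ s in Ioc r m, ENNReal.ofReal ((t - s) ^ p * (s - r) ^ q)
      ≤ ENNReal.ofReal (max 1 (2 ^ (-p)) / (q + 1) * d ^ (p + q + 1)) := by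
    have hb : ∫⁻ s in Ioc r m, ENNReal.ofReal ((t - s) ^ p * (s - r) ^ q)
        ≤ ∫⁻ s in Ioc r m, ENNReal.ofReal (d ^ p * max 1 (2 ^ (-p))) * ENNReal.ofReal ((s - r) ^ q) := by
      apply lintegral_mono_ae
      filter_upwards [ae_restrict_mem measurableSet_Ioc] with s hs
      rw [← ENNReal.ofReal_mul (by positivity)]
      apply ENNReal.ofReal_le_ofReal
      apply mul_le_mul_of_nonneg_right _ (Real.rpow_nonneg (by linarith [hs.1]) _)
      exact half_bound hd (by simp [hm, hdd]; linarith [hs.2]) (by simp [hdd]; linarith [hs.1])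
    rw [lintegral_const_mul' _ _ ENNReal.ofReal_ne_top, L0 hq hrm.le] at hb
    refine hb.trans ?_
    have hq1 : (0:ℝ) < q + 1 := by linarith
    rw [← ENNReal.ofReal_mul (by positivity)]
    apply ENNReal.ofReal_le_ofReal
    have h1 : (m - r) ^ (q + 1) ≤ d ^ (q + 1) :=
      Real.rpow_le_rpow (by simp [hm]; linarith) (by simp [hm, hdd]; linarith) (by linarith)
    have lhs_eq : d ^ p * max 1 (2 ^ (-p)) * ((m - r) ^ (q + 1) / (q + 1))
        = d ^ p * (m - r) ^ (q + 1) * (max 1 (2 ^ (-p)) / (q + 1)) := by ring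
    have rhs_eq : max 1 (2 ^ (-p)) / (q + 1) * d ^ (p + q + 1)
        = d ^ p * d ^ (q + 1) * (max 1 (2 ^ (-p)) / (q + 1)) := by rw [e]; ring
    rw [lhs_eq, rhs_eq]
    apply mul_le_mul_of_nonneg_right _ (by positivity)
    exact mul_le_mul_of_nonneg_left h1 (Real.rpow_nonneg hd.le _)
  have piece2 : ∫⁻ s in Ioc m t, ENNReal.ofReal ((t - s) ^ p * (s - r) ^ q)
      ≤ ENNReal.ofReal (max 1 (2 ^ (-q)) / (p + 1) * d ^ (p + q + 1)) := by
    have hb : ∫⁻ s in Ioc m t, ENNReal.ofReal ((t - s) ^ p * (s - r) ^ q)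
        ≤ ∫⁻ s in Ioc m t, ENNReal.ofReal (d ^ q * max 1 (2 ^ (-q))) * ENNReal.ofReal ((t - s) ^ p) := by
      apply lintegral_mono_ae
      filter_upwards [ae_restrict_mem measurableSet_Ioc] with s hs
      rw [← ENNReal.ofReal_mul (by positivity)]
      apply ENNReal.ofReal_le_ofReal
      have hsb : (s - r) ^ q ≤ d ^ q * max 1 (2 ^ (-q)) :=
        half_bound hd (by simp [hm, hdd]; linarith [hs.1]) (by simp [hdd]; linarith [hs.2])
      calc (t - s) ^ p * (s - r) ^ q ≤ (t - s) ^ p * (d ^ q * max 1 (2 ^ (-q))) :=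
            mul_le_mul_of_nonneg_left hsb (Real.rpow_nonneg (by linarith [hs.2]) _)
        _ = d ^ q * max 1 (2 ^ (-q)) * (t - s) ^ p := by ring
    rw [lintegral_const_mul' _ _ ENNReal.ofReal_ne_top, L0' hp hmt.le] at hb
    refine hb.trans ?_
    have hp1 : (0:ℝ) < p + 1 := by linarith
    rw [← ENNReal.ofReal_mul (by positivity)]
    apply ENNReal.ofReal_le_ofReal
    have h1 : (t - m) ^ (p + 1) ≤ d ^ (p + 1) :=
      Real.rpow_le_rpow (by simp [hm]; linarith) (by simp [hm, hdd]; linarith) (by linarith)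
    have e2 : d ^ (p + q + 1) = d ^ q * d ^ (p + 1) := by
      rw [show p + q + 1 = q + (p + 1) by ring, Real.rpow_add hd]
    have lhs_eq : d ^ q * max 1 (2 ^ (-q)) * ((t - m) ^ (p + 1) / (p + 1))
        = d ^ q * (t - m) ^ (p + 1) * (max 1 (2 ^ (-q)) / (p + 1)) := by ring
    have rhs_eq : max 1 (2 ^ (-q)) / (p + 1) * d ^ (p + q + 1)
        = d ^ q * d ^ (p + 1) * (max 1 (2 ^ (-q)) / (p + 1)) := by rw [e2]; ring
    rw [lhs_eq, rhs_eq]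
    apply mul_le_mul_of_nonneg_right _ (by positivity)
    exact mul_le_mul_of_nonneg_left h1 (Real.rpow_nonneg hd.le _)
  refine (add_le_add piece1 piece2).trans ?_
  have hq1 : (0:ℝ) < q + 1 := by linarith
  have hp1 : (0:ℝ) < p + 1 := by linarith
  rw [← ENNReal.ofReal_add (by positivity) (by positivity)]
  apply ENNReal.ofReal_le_ofReal
  unfold Cpq
  ring_nf
  exact le_refl _

lemma rpow_cmp {T t a b : ℝ} (ht : 0 < t) (htT : t ≤ T) (hab : b ≤ a) :
    t ^ a ≤ max 1 (T ^ (a - b)) * t ^ b := by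
  rcases le_or_gt t 1 with h1 | h1
  · calc t ^ a ≤ t ^ b := Real.rpow_le_rpow_of_exponent_ge ht h1 hab
      _ ≤ max 1 (T ^ (a - b)) * t ^ b :=
        le_mul_of_one_le_left (Real.rpow_nonneg ht.le _) (le_max_left _ _)
  · have e : t ^ a = t ^ (a - b) * t ^ b := by
      rw [← Real.rpow_add ht]; ring_nf
    rw [e]
    apply mul_le_mul_of_nonneg_right _ (Real.rpow_nonneg ht.le _)
    calc t ^ (a - b) ≤ T ^ (a - b) := Real.rpow_le_rpow ht.le htT (by linarith)
      _ ≤ max 1 (T ^ (a - b)) := le_max_right _ _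

lemma swapIoc {T : ℝ} {F : ℝ → ℝ → ℝ≥0∞} (hF : Measurable (Function.uncurry F)) :
    ∫⁻ t in Ioc 0 T, ∫⁻ s in Ioc 0 t, F t s = ∫⁻ s in Ioc 0 T, ∫⁻ t in Ioc s T, F t s := by
  have hset : MeasurableSet {p : ℝ × ℝ | p.2 ≤ p.1} := measurableSet_le measurable_snd measurable_fst
  have key : ∀ t ∈ Ioc (0:ℝ) T, ∫⁻ s in Ioc 0 t, F t s
      = ∫⁻ s in Ioc 0 T, ({p : ℝ × ℝ | p.2 ≤ p.1}).indicator (Function.uncurry F) (t, s) := by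
    intro t ht
    have hind : ∀ s, ({p : ℝ × ℝ | p.2 ≤ p.1}).indicator (Function.uncurry F) (t, s)
        = (Iic t).indicator (fun s => F t s) s := by
      intro s; by_cases h : s ≤ t <;> simp [Set.indicator, h, Function.uncurry]
    rw [show (∫⁻ s in Ioc 0 T, ({p : ℝ × ℝ | p.2 ≤ p.1}).indicator (Function.uncurry F) (t, s))
        = ∫⁻ s in Ioc 0 T, (Iic t).indicator (fun s => F t s) s from lintegral_congr fun s => hind s]
    rw [lintegral_indicator measurableSet_Iic, Measure.restrict_restrict measurableSet_Iic]
    have hss : Iic t ∩ Ioc 0 T = Ioc 0 t := by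
      ext x
      simp only [mem_inter_iff, mem_Iic, mem_Ioc]
      constructor
      · rintro ⟨h1, h2, h3⟩; exact ⟨h2, h1⟩
      · rintro ⟨h1, h2⟩; exact ⟨h2, h1, h2.trans ht.2⟩
    rw [hss]
  have key2 : ∀ s ∈ Ioc (0:ℝ) T, ∫⁻ t in Ioc 0 T, ({p : ℝ × ℝ | p.2 ≤ p.1}).indicator (Function.uncurry F) (t, s)
      = ∫⁻ t in Ioc s T, F t s := by
    intro s hs
    have hind : ∀ t, ({p : ℝ × ℝ | p.2 ≤ p.1}).indicator (Function.uncurry F) (t, s)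
        = (Ici s).indicator (fun t => F t s) t := by
      intro t; by_cases h : s ≤ t <;> simp [Set.indicator, h, Function.uncurry]
    rw [show (∫⁻ t in Ioc 0 T, ({p : ℝ × ℝ | p.2 ≤ p.1}).indicator (Function.uncurry F) (t, s))
        = ∫⁻ t in Ioc 0 T, (Ici s).indicator (fun t => F t s) t from lintegral_congr fun t => hind t]
    rw [lintegral_indicator measurableSet_Ici, Measure.restrict_restrict measurableSet_Ici]
    have hIcc : Ici s ∩ Ioc 0 T = Icc s T := by
      ext x
      simp only [mem_inter_iff, mem_Ici, mem_Ioc, mem_Icc]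
      constructor
      · rintro ⟨h1, h2, h3⟩; exact ⟨h1, h3⟩
      · rintro ⟨h1, h2⟩; exact ⟨h1, lt_of_lt_of_le hs.1 h1, h2⟩
    rw [hIcc, Measure.restrict_congr_set Ioc_ae_eq_Icc.symm]
  calc ∫⁻ t in Ioc 0 T, ∫⁻ s in Ioc 0 t, F t s
      = ∫⁻ t in Ioc 0 T, ∫⁻ s in Ioc 0 T, ({p : ℝ × ℝ | p.2 ≤ p.1}).indicator (Function.uncurry F) (t, s) :=
        setLIntegral_congr_fun measurableSet_Ioc key
    _ = ∫⁻ s in Ioc 0 T, ∫⁻ t in Ioc 0 T, ({p : ℝ × ℝ | p.2 ≤ p.1}).indicator (Function.uncurry F) (t, s) :=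
        lintegral_lintegral_swap (hF.indicator hset).aemeasurable
    _ = ∫⁻ s in Ioc 0 T, ∫⁻ t in Ioc s T, F t s :=
        setLIntegral_congr_fun measurableSet_Ioc key2

set_option maxHeartbeats 2000000 in
lemma l1bound {γ β T C₂ : ℝ} (hγ : γ ∈ Ico (0:ℝ) 1) (hβ : β ∈ Ico (0:ℝ) 1)
    (hT : 0 < T) (hC₂ : 0 < C₂) :
    ∃ M > 0, ∀ g : ℝ → ℝ≥0∞, Measurable g →
      (∫⁻ s in Ioc 0 T, g s) < ⊤ →
      (∀ᵐ t ∂(volume.restrict (Ioc 0 T)), g t ≤ ENNReal.ofReal (t ^ (-β))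
        + ENNReal.ofReal C₂ * ∫⁻ s in Ioc 0 t, ENNReal.ofReal ((t - s) ^ (-γ)) * g s) →
      (∫⁻ s in Ioc 0 T, g s) ≤ ENNReal.ofReal M := by
  obtain ⟨hγ0, hγ1⟩ := hγ
  obtain ⟨hβ0, hβ1⟩ := hβ
  have h1γ : (0:ℝ) < 1 - γ := by linarith
  set ε : ℝ := min 1 ((1 - γ) / (8 * C₂)) with hεdef
  have hε : 0 < ε := lt_min one_pos (by positivity)
  set δ : ℝ := ε ^ ((1:ℝ) / (1 - γ)) with hδdef
  have hδpos : 0 < δ := Real.rpow_pos_of_pos hε _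
  have hδ1 : δ ^ (1 - γ) = ε := by
    rw [hδdef, ← Real.rpow_mul hε.le]
    rw [show (1:ℝ) / (1 - γ) * (1 - γ) = 1 by field_simp]
    exact Real.rpow_one ε
  have hA : C₂ * (δ ^ (1 - γ) / (1 - γ)) ≤ 1 / 4 := by
    rw [hδ1]
    have hle : ε ≤ (1 - γ) / (8 * C₂) := min_le_right _ _
    have e2 : ε / (1 - γ) ≤ 1 / (8 * C₂) := by
      rw [div_le_div_iff₀ h1γ (by positivity)]
      rw [le_div_iff₀ (by positivity)] at hle
      linarith
    calc C₂ * (ε / (1 - γ)) ≤ C₂ * (1 / (8 * C₂)) := mul_le_mul_of_nonneg_left e2 hC₂.le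
      _ ≤ 1 / 4 := by rw [mul_one_div, div_le_div_iff₀ (by positivity) (by norm_num)]; nlinarith
  set lam : ℝ := max 1 (4 * C₂ * T * δ ^ (-γ - 1)) with hlamdef
  have hlam1 : (1:ℝ) ≤ lam := le_max_left _ _
  have hlampos : (0:ℝ) < lam := lt_of_lt_of_le one_pos hlam1
  have hB : C₂ * (T * Real.exp (-(lam * δ)) * δ ^ (-γ)) ≤ 1 / 4 := by
    have h1 : lam * δ ≤ Real.exp (lam * δ) := by
      have := Real.add_one_le_exp (lam * δ); linarith
    have hexp : Real.exp (-(lam * δ)) ≤ 1 / (lam * δ) := by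
      rw [Real.exp_neg, one_div]
      exact inv_anti₀ (by positivity) h1
    have hlamge : 4 * C₂ * T * δ ^ (-γ - 1) ≤ lam := le_max_right _ _
    have hδpow : δ ^ (-γ - 1) = δ ^ (-γ) / δ := by
      rw [show -γ - 1 = -γ - 1 from rfl, Real.rpow_sub hδpos, Real.rpow_one]
    have key : C₂ * (T * Real.exp (-(lam * δ)) * δ ^ (-γ))
        ≤ C₂ * T * δ ^ (-γ - 1) / lam := by
      have h2 : C₂ * (T * Real.exp (-(lam * δ)) * δ ^ (-γ))
          ≤ C₂ * (T * (1 / (lam * δ)) * δ ^ (-γ)) := by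
        apply mul_le_mul_of_nonneg_left _ hC₂.le
        apply mul_le_mul_of_nonneg_right _ (Real.rpow_nonneg hδpos.le _)
        exact mul_le_mul_of_nonneg_left hexp hT.le
      refine h2.trans (le_of_eq ?_)
      rw [hδpow]
      field_simp
    refine key.trans ?_
    rw [div_le_iff₀ hlampos]
    nlinarith [Real.rpow_nonneg hδpos.le (-γ - 1)]
  have h1β : (0:ℝ) < 1 - β := by linarith
  refine ⟨2 * Real.exp (lam * T) * (T ^ (1 - β) / (1 - β)), by positivity, ?_⟩
  intro g hg hfin hae
  set Il : ℝ≥0∞ := ∫⁻ t in Ioc 0 T, ENNReal.ofReal (Real.exp (-(lam * t))) * g t with hIldef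
  have hIlle : Il ≤ ∫⁻ s in Ioc 0 T, g s := by
    apply lintegral_mono_ae
    filter_upwards [ae_restrict_mem measurableSet_Ioc] with t ht
    calc ENNReal.ofReal (Real.exp (-(lam * t))) * g t ≤ 1 * g t := by
          apply mul_le_mul_left
          exact ENNReal.ofReal_le_one.mpr (Real.exp_le_one_iff.mpr (by nlinarith [ht.1]))
      _ = g t := one_mul _
  have hIlfin : Il ≠ ⊤ := (lt_of_le_of_lt hIlle hfin).ne
  set θ : ℝ := δ ^ (1 - γ) / (1 - γ) + T * Real.exp (-(lam * δ)) * δ ^ (-γ) with hθdef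
  have hθpos : 0 < θ := by positivity
  have hCθ : C₂ * θ ≤ 1 / 2 := by
    rw [hθdef, mul_add]
    have : C₂ * (T * Real.exp (-(lam * δ)) * δ ^ (-γ)) ≤ 1/4 := hB
    have h2 : C₂ * (δ ^ (1 - γ) / (1 - γ)) ≤ 1/4 := hA
    linarith
  have hmexp : Measurable fun t : ℝ => ENNReal.ofReal (Real.exp (-(lam * t))) :=
    ((measurable_id.const_mul lam).neg.exp).ennreal_ofReal
  have hmβ : Measurable fun t : ℝ => ENNReal.ofReal (t ^ (-β)) :=
    (measurable_id.pow measurable_const).ennreal_ofReal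
  set Φ : ℝ → ℝ≥0∞ := fun t => ∫⁻ s in Ioc 0 t, ENNReal.ofReal ((t - s) ^ (-γ)) * g s with hΦdef
  set A0 : ℝ≥0∞ := ENNReal.ofReal (T ^ (1 - β) / (1 - β)) with hA0def
  have hL0β : ∫⁻ t in Ioc 0 T, ENNReal.ofReal (t ^ (-β)) = A0 := by
    have h := L0 (a := 0) (b := T) (q := -β) (by linarith) hT.le
    simp only [sub_zero] at h
    rw [h, hA0def, show -β + 1 = 1 - β by ring]
  have hmker : Measurable (Function.uncurry fun t s : ℝ =>
      ENNReal.ofReal (Real.exp (-(lam * t))) * (ENNReal.ofReal ((t - s) ^ (-γ)) * g s)) := by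
    apply Measurable.mul
    · exact ((measurable_fst.const_mul lam).neg.exp).ennreal_ofReal
    · exact (((measurable_fst.sub measurable_snd).pow measurable_const).ennreal_ofReal).mul
        (hg.comp measurable_snd)
  have inner_bound : ∀ s ∈ Ioc (0:ℝ) T,
      (∫⁻ t in Ioc s T, ENNReal.ofReal (Real.exp (-(lam * t)) * (t - s) ^ (-γ)))
        ≤ ENNReal.ofReal (Real.exp (-(lam * s)) * θ) := by
    intro s hs
    have hpt : ∀ t ∈ Ioc s T, ENNReal.ofReal (Real.exp (-(lam * t)) * (t - s) ^ (-γ))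
        ≤ (Ioc s (s + δ)).indicator (fun t => ENNReal.ofReal (Real.exp (-(lam * s)) * (t - s) ^ (-γ))) t
          + ENNReal.ofReal (Real.exp (-(lam * s)) * (Real.exp (-(lam * δ)) * δ ^ (-γ))) := by
      intro t ht
      by_cases hcase : t ≤ s + δ
      · rw [Set.indicator_of_mem (show t ∈ Ioc s (s + δ) from ⟨ht.1, hcase⟩)]
        refine le_trans ?_ le_self_add
        apply ENNReal.ofReal_le_ofReal
        apply mul_le_mul_of_nonneg_right _ (Real.rpow_nonneg (by linarith [ht.1]) _)
        exact Real.exp_le_exp.mpr (by nlinarith [ht.1.le, hs.1])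
      · rw [Set.indicator_of_notMem (fun hmem => hcase hmem.2), zero_add]
        apply ENNReal.ofReal_le_ofReal
        have h1 : (t - s) ^ (-γ) ≤ δ ^ (-γ) :=
          Real.rpow_le_rpow_of_nonpos hδpos (by linarith) (by linarith)
        have h2 : Real.exp (-(lam * t)) ≤ Real.exp (-(lam * s)) * Real.exp (-(lam * δ)) := by
          rw [← Real.exp_add]
          exact Real.exp_le_exp.mpr (by nlinarith)
        calc Real.exp (-(lam * t)) * (t - s) ^ (-γ)
            ≤ Real.exp (-(lam * s)) * Real.exp (-(lam * δ)) * (δ ^ (-γ)) :=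
              mul_le_mul h2 h1 (Real.rpow_nonneg (by linarith [ht.1]) _) (by positivity)
          _ = Real.exp (-(lam * s)) * (Real.exp (-(lam * δ)) * δ ^ (-γ)) := by ring
    calc (∫⁻ t in Ioc s T, ENNReal.ofReal (Real.exp (-(lam * t)) * (t - s) ^ (-γ)))
        ≤ ∫⁻ t in Ioc s T,
            ((Ioc s (s + δ)).indicator (fun t => ENNReal.ofReal (Real.exp (-(lam * s)) * (t - s) ^ (-γ))) t
              + ENNReal.ofReal (Real.exp (-(lam * s)) * (Real.exp (-(lam * δ)) * δ ^ (-γ)))) := by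
          apply lintegral_mono_ae
          filter_upwards [ae_restrict_mem measurableSet_Ioc] with t ht
          exact hpt t ht
      _ = (∫⁻ t in Ioc s T,
            (Ioc s (s + δ)).indicator (fun t => ENNReal.ofReal (Real.exp (-(lam * s)) * (t - s) ^ (-γ))) t)
          + ∫⁻ _ in Ioc s T, ENNReal.ofReal (Real.exp (-(lam * s)) * (Real.exp (-(lam * δ)) * δ ^ (-γ))) :=
          lintegral_add_right _ measurable_const
      _ ≤ ENNReal.ofReal (Real.exp (-(lam * s)) * (δ ^ (1 - γ) / (1 - γ)))
          + ENNReal.ofReal (Real.exp (-(lam * s)) * (Real.exp (-(lam * δ)) * δ ^ (-γ))) * ENNReal.ofReal T := by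
          apply add_le_add
          · rw [lintegral_indicator measurableSet_Ioc, Measure.restrict_restrict measurableSet_Ioc]
            calc ∫⁻ t in Ioc s (s + δ) ∩ Ioc s T, ENNReal.ofReal (Real.exp (-(lam * s)) * (t - s) ^ (-γ))
                ≤ ∫⁻ t in Ioc s (s + δ), ENNReal.ofReal (Real.exp (-(lam * s)) * (t - s) ^ (-γ)) :=
                  lintegral_mono' (Measure.restrict_mono inter_subset_left le_rfl) le_rfl
              _ = ENNReal.ofReal (Real.exp (-(lam * s))) * ∫⁻ t in Ioc s (s + δ), ENNReal.ofReal ((t - s) ^ (-γ)) := by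
                  rw [← lintegral_const_mul' _ _ ENNReal.ofReal_ne_top]
                  exact lintegral_congr fun t => by
                    rw [← ENNReal.ofReal_mul (Real.exp_nonneg _)]
              _ = ENNReal.ofReal (Real.exp (-(lam * s))) * ENNReal.ofReal ((s + δ - s) ^ (-γ + 1) / (-γ + 1)) := by
                  rw [L0 (by linarith) (by linarith)]
              _ = ENNReal.ofReal (Real.exp (-(lam * s)) * (δ ^ (1 - γ) / (1 - γ))) := by
                  rw [← ENNReal.ofReal_mul (Real.exp_nonneg _)]
                  congr 2
                  · congr 1 <;> [skip; ring]
                    congr 1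
                    · ring
                    · ring
          · rw [setLIntegral_const, Real.volume_Ioc]
            apply mul_le_mul_right
            exact ENNReal.ofReal_le_ofReal (by linarith [hs.1])
      _ ≤ ENNReal.ofReal (Real.exp (-(lam * s)) * θ) := by
          rw [← ENNReal.ofReal_mul (by positivity), ← ENNReal.ofReal_add (by positivity) (by positivity)]
          apply ENNReal.ofReal_le_ofReal
          rw [hθdef]
          nlinarith [Real.exp_nonneg (-(lam * s))]
  have step2 : (∫⁻ t in Ioc 0 T, ENNReal.ofReal (Real.exp (-(lam * t))) * Φ t)
      ≤ ENNReal.ofReal θ * Il := by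
    calc (∫⁻ t in Ioc 0 T, ENNReal.ofReal (Real.exp (-(lam * t))) * Φ t)
        = ∫⁻ t in Ioc 0 T, ∫⁻ s in Ioc 0 t,
            ENNReal.ofReal (Real.exp (-(lam * t))) * (ENNReal.ofReal ((t - s) ^ (-γ)) * g s) :=
          lintegral_congr fun t => (lintegral_const_mul' _ _ ENNReal.ofReal_ne_top).symm
      _ = ∫⁻ s in Ioc 0 T, ∫⁻ t in Ioc s T,
            ENNReal.ofReal (Real.exp (-(lam * t))) * (ENNReal.ofReal ((t - s) ^ (-γ)) * g s) :=
          swapIoc hmker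
      _ ≤ ∫⁻ s in Ioc 0 T, g s * ENNReal.ofReal (Real.exp (-(lam * s)) * θ) := by
          apply lintegral_mono_ae
          filter_upwards [ae_restrict_mem measurableSet_Ioc] with s hs
          have hmf : Measurable fun t : ℝ => ENNReal.ofReal (Real.exp (-(lam * t)) * (t - s) ^ (-γ)) :=
            (((measurable_id.const_mul lam).neg.exp).mul
              ((measurable_id.sub measurable_const).pow measurable_const)).ennreal_ofReal
          have e1 : (∫⁻ t in Ioc s T, g s * ENNReal.ofReal (Real.exp (-(lam * t)) * (t - s) ^ (-γ)))
              = g s * ∫⁻ t in Ioc s T, ENNReal.ofReal (Real.exp (-(lam * t)) * (t - s) ^ (-γ)) :=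
            lintegral_const_mul _ hmf
          have e0 : (∫⁻ t in Ioc s T,
              ENNReal.ofReal (Real.exp (-(lam * t))) * (ENNReal.ofReal ((t - s) ^ (-γ)) * g s))
              = ∫⁻ t in Ioc s T, g s * ENNReal.ofReal (Real.exp (-(lam * t)) * (t - s) ^ (-γ)) :=
            lintegral_congr fun t => by rw [ENNReal.ofReal_mul (Real.exp_nonneg _)]; ring
          rw [e0, e1]
          exact mul_le_mul_right (inner_bound s hs) _
      _ = ENNReal.ofReal θ * Il := by
          have e2 : (∫⁻ s in Ioc 0 T, g s * ENNReal.ofReal (Real.exp (-(lam * s)) * θ))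
              = ∫⁻ s in Ioc 0 T, ENNReal.ofReal θ * (ENNReal.ofReal (Real.exp (-(lam * s))) * g s) :=
            lintegral_congr fun s => by rw [ENNReal.ofReal_mul (Real.exp_nonneg _)]; ring
          rw [hIldef, e2, lintegral_const_mul' _ _ ENNReal.ofReal_ne_top]
  have main1 : Il ≤ A0 + ENNReal.ofReal (1/2) * Il := by
    calc Il ≤ ∫⁻ t in Ioc 0 T, ENNReal.ofReal (Real.exp (-(lam * t)))
          * (ENNReal.ofReal (t ^ (-β)) + ENNReal.ofReal C₂ * Φ t) := by
          apply lintegral_mono_ae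
          filter_upwards [hae] with t h
          exact mul_le_mul_right h _
      _ = (∫⁻ t in Ioc 0 T, ENNReal.ofReal (Real.exp (-(lam * t))) * ENNReal.ofReal (t ^ (-β)))
          + ∫⁻ t in Ioc 0 T, ENNReal.ofReal (Real.exp (-(lam * t))) * (ENNReal.ofReal C₂ * Φ t) := by
          simp_rw [mul_add]
          exact lintegral_add_left (hmexp.mul hmβ) _
      _ ≤ A0 + ENNReal.ofReal C₂ * ∫⁻ t in Ioc 0 T, ENNReal.ofReal (Real.exp (-(lam * t))) * Φ t := by
          apply add_le_add
          · rw [← hL0β]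
            apply lintegral_mono_ae
            filter_upwards [ae_restrict_mem measurableSet_Ioc] with t ht
            calc ENNReal.ofReal (Real.exp (-(lam * t))) * ENNReal.ofReal (t ^ (-β))
                ≤ 1 * ENNReal.ofReal (t ^ (-β)) := mul_le_mul_left
                  (ENNReal.ofReal_le_one.mpr (Real.exp_le_one_iff.mpr (by nlinarith [ht.1]))) _
              _ = ENNReal.ofReal (t ^ (-β)) := one_mul _
          · rw [← lintegral_const_mul' _ _ ENNReal.ofReal_ne_top]
            exact le_of_eq (lintegral_congr fun t => by ring)
      _ ≤ A0 + ENNReal.ofReal C₂ * (ENNReal.ofReal θ * Il) :=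
          add_le_add_right (mul_le_mul_right step2 _) _
      _ ≤ A0 + ENNReal.ofReal (1/2) * Il := by
          apply add_le_add_right
          rw [← mul_assoc, ← ENNReal.ofReal_mul hC₂.le]
          exact mul_le_mul_left (ENNReal.ofReal_le_ofReal hCθ) _
  have hhalf : ENNReal.ofReal (1/2) * Il ≤ A0 := by
    have hsum : ENNReal.ofReal (1/2) * Il + ENNReal.ofReal (1/2) * Il = Il := by
      rw [← add_mul, ← ENNReal.ofReal_add (by norm_num) (by norm_num)]
      norm_num
    have h3 : ENNReal.ofReal (1/2) * Il + ENNReal.ofReal (1/2) * Il ≤ A0 + ENNReal.ofReal (1/2) * Il := by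
      rw [hsum]; exact main1
    exact (ENNReal.add_le_add_iff_right (ENNReal.mul_ne_top ENNReal.ofReal_ne_top hIlfin)).mp h3
  have hIl2 : Il ≤ ENNReal.ofReal 2 * A0 := by
    calc Il = ENNReal.ofReal 2 * ENNReal.ofReal (1/2) * Il := by
          rw [← ENNReal.ofReal_mul (by norm_num)]
          norm_num
      _ = ENNReal.ofReal 2 * (ENNReal.ofReal (1/2) * Il) := mul_assoc _ _ _
      _ ≤ ENNReal.ofReal 2 * A0 := mul_le_mul_right hhalf _
  calc (∫⁻ s in Ioc 0 T, g s)
      ≤ ∫⁻ s in Ioc 0 T, ENNReal.ofReal (Real.exp (lam * T))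
        * (ENNReal.ofReal (Real.exp (-(lam * s))) * g s) := by
        apply lintegral_mono_ae
        filter_upwards [ae_restrict_mem measurableSet_Ioc] with s hs
        have h1 : (1:ℝ≥0∞) ≤ ENNReal.ofReal (Real.exp (lam * T)) * ENNReal.ofReal (Real.exp (-(lam * s))) := by
          rw [← ENNReal.ofReal_mul (Real.exp_nonneg _), ← Real.exp_add]
          exact ENNReal.one_le_ofReal.mpr (Real.one_le_exp (by nlinarith [hs.2]))
        calc g s = 1 * g s := (one_mul _).symm
          _ ≤ ENNReal.ofReal (Real.exp (lam * T)) * ENNReal.ofReal (Real.exp (-(lam * s))) * g s :=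
            mul_le_mul_left h1 _
          _ = ENNReal.ofReal (Real.exp (lam * T)) * (ENNReal.ofReal (Real.exp (-(lam * s))) * g s) :=
            mul_assoc _ _ _
    _ = ENNReal.ofReal (Real.exp (lam * T)) * Il := lintegral_const_mul' _ _ ENNReal.ofReal_ne_top
    _ ≤ ENNReal.ofReal (Real.exp (lam * T)) * (ENNReal.ofReal 2 * A0) := mul_le_mul_right hIl2 _
    _ ≤ ENNReal.ofReal (2 * Real.exp (lam * T) * (T ^ (1 - β) / (1 - β))) := by
        rw [hA0def, ← ENNReal.ofReal_mul (by norm_num), ← ENNReal.ofReal_mul (Real.exp_nonneg _)]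
        exact ENNReal.ofReal_le_ofReal (le_of_eq (by ring))

set_option maxHeartbeats 2000000 in
lemma bootstrap {γ β T C₂ M : ℝ} (hγ : γ ∈ Ico (0:ℝ) 1) (hβ : β ∈ Ico (0:ℝ) 1)
    (hT : 0 < T) (hC₂ : 0 < C₂) (hM : 0 < M) :
    ∀ (k : ℕ) (a : ℝ), -1 < a → 0 < a + k * (1 - γ) →
    ∃ K > 0, ∀ g : ℝ → ℝ≥0∞, Measurable g →
      (∫⁻ s in Ioc 0 T, g s) ≤ ENNReal.ofReal M →
      (∀ᵐ t ∂(volume.restrict (Ioc 0 T)), g t ≤ ENNReal.ofReal (t ^ (-β))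
        + ENNReal.ofReal C₂ * ∫⁻ s in Ioc 0 t, ENNReal.ofReal ((t - s) ^ (-γ)) * g s) →
      ∀ t ∈ Ioc (0:ℝ) T, (∫⁻ s in Ioc 0 t, ENNReal.ofReal ((t - s) ^ a) * g s)
        ≤ ENNReal.ofReal (K * t ^ (min 0 (a + 1 - β))) := by
  obtain ⟨hγ0, hγ1⟩ := hγ
  obtain ⟨hβ0, hβ1⟩ := hβ
  have h1γ : (0:ℝ) < 1 - γ := by linarith
  intro k
  induction k with
  | zero =>
    intro a ha h0
    norm_num at h0
    set m : ℝ := min 0 (a + 1 - β) with hmdef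
    have hm0 : m ≤ 0 := min_le_left _ _
    refine ⟨M * T ^ a * T ^ (-m), by positivity, ?_⟩
    intro g hg hint hae t ht
    calc (∫⁻ s in Ioc 0 t, ENNReal.ofReal ((t - s) ^ a) * g s)
        ≤ ∫⁻ s in Ioc 0 t, ENNReal.ofReal (T ^ a) * g s := by
          apply lintegral_mono_ae
          filter_upwards [ae_restrict_mem measurableSet_Ioc] with s hs
          apply mul_le_mul_left
          apply ENNReal.ofReal_le_ofReal
          exact Real.rpow_le_rpow (by linarith [hs.2]) (by linarith [hs.1, ht.2]) h0.le
      _ = ENNReal.ofReal (T ^ a) * ∫⁻ s in Ioc 0 t, g s :=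
          lintegral_const_mul' _ _ ENNReal.ofReal_ne_top
      _ ≤ ENNReal.ofReal (T ^ a) * ENNReal.ofReal M := by
          apply mul_le_mul_right
          refine le_trans ?_ hint
          exact lintegral_mono' (Measure.restrict_mono (Ioc_subset_Ioc_right ht.2) le_rfl) le_rfl
      _ ≤ ENNReal.ofReal (M * T ^ a * T ^ (-m) * t ^ m) := by
          rw [← ENNReal.ofReal_mul (by positivity)]
          apply ENNReal.ofReal_le_ofReal
          have h1 : T ^ m ≤ t ^ m := Real.rpow_le_rpow_of_nonpos ht.1 ht.2 hm0
          have h2 : T ^ (-m) * T ^ m = 1 := by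
            rw [← Real.rpow_add hT]; norm_num
          have h3 : 1 ≤ T ^ (-m) * t ^ m := by
            nlinarith [Real.rpow_pos_of_pos hT (-m)]
          have h4 : M * T ^ a * 1 ≤ M * T ^ a * (T ^ (-m) * t ^ m) :=
            mul_le_mul_of_nonneg_left h3 (by positivity)
          nlinarith [h4]
  | succ k ih =>
    intro a ha h0
    by_cases hcase : 0 < a + k * (1 - γ)
    · exact ih a ha hcase
    · set a' : ℝ := a + 1 - γ with ha'def
      have ha' : -1 < a' := by rw [ha'def]; linarith
      have h0' : 0 < a' + k * (1 - γ) := by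
        push_cast at h0
        rw [ha'def]; nlinarith
      obtain ⟨K', hK'pos, hK'⟩ := ih a' ha' h0'
      set m : ℝ := min 0 (a + 1 - β) with hmdef
      set m' : ℝ := min 0 (a' + 1 - β) with hm'def
      have hmm' : m ≤ m' := min_le_min le_rfl (by rw [ha'def]; linarith)
      have hm0 : m ≤ 0 := min_le_left _ _
      have hmle : m ≤ a + 1 - β := min_le_right _ _
      have hβ' : (-1:ℝ) < -β := by linarith
      have hγ' : (-1:ℝ) < -γ := by linarith
      have hCb := Cpq_pos ha hβ'
      have hCg := Cpq_pos ha hγ'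
      refine ⟨Cpq a (-β) * max 1 (T ^ (a + 1 - β - m))
        + C₂ * Cpq a (-γ) * K' * max 1 (T ^ (m' - m)), by positivity, ?_⟩
      intro g hg hint hae t ht
      set Φ : ℝ → ℝ≥0∞ := fun s => ∫⁻ r in Ioc 0 s, ENNReal.ofReal ((s - r) ^ (-γ)) * g r with hΦdef
      have hmleft : Measurable fun s : ℝ => ENNReal.ofReal ((t - s) ^ a) * ENNReal.ofReal (s ^ (-β)) :=
        (((measurable_const.sub measurable_id).pow measurable_const).ennreal_ofReal).mul
          ((measurable_id.pow measurable_const).ennreal_ofReal)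
      have step1 : (∫⁻ s in Ioc 0 t, ENNReal.ofReal ((t - s) ^ a) * g s)
          ≤ (∫⁻ s in Ioc 0 t, ENNReal.ofReal ((t - s) ^ a) * ENNReal.ofReal (s ^ (-β)))
            + ∫⁻ s in Ioc 0 t, ENNReal.ofReal ((t - s) ^ a) * (ENNReal.ofReal C₂ * Φ s) := by
        rw [← lintegral_add_left hmleft]
        apply lintegral_mono_ae
        have hae' := ae_restrict_of_ae_restrict_of_subset (Ioc_subset_Ioc_right ht.2) hae
        filter_upwards [hae'] with s hs
        calc ENNReal.ofReal ((t - s) ^ a) * g s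
            ≤ ENNReal.ofReal ((t - s) ^ a)
              * (ENNReal.ofReal (s ^ (-β)) + ENNReal.ofReal C₂ * Φ s) := mul_le_mul_right hs _
          _ = _ := by rw [mul_add]
      have term1 : (∫⁻ s in Ioc 0 t, ENNReal.ofReal ((t - s) ^ a) * ENNReal.ofReal (s ^ (-β)))
          ≤ ENNReal.ofReal (Cpq a (-β) * t ^ (a + -β + 1)) := by
        have e1 : (∫⁻ s in Ioc 0 t, ENNReal.ofReal ((t - s) ^ a) * ENNReal.ofReal (s ^ (-β)))
            = ∫⁻ s in Ioc 0 t, ENNReal.ofReal ((t - s) ^ a * (s - 0) ^ (-β)) := by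
          apply setLIntegral_congr_fun_ae measurableSet_Ioc
          filter_upwards with s hs
          rw [sub_zero, ← ENNReal.ofReal_mul (Real.rpow_nonneg (by linarith [hs.2]) _)]
        rw [e1]
        have := L1 (p := a) (q := -β) (r := 0) (t := t) ha hβ' ht.1
        simpa using this
      have hmker2 : Measurable (Function.uncurry fun s r : ℝ =>
          ENNReal.ofReal ((t - s) ^ a) * (ENNReal.ofReal ((s - r) ^ (-γ)) * g r)) :=
        (((measurable_const.sub measurable_fst).pow measurable_const).ennreal_ofReal).mul
          ((((measurable_fst.sub measurable_snd).pow measurable_const).ennreal_ofReal).mul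
            (hg.comp measurable_snd))
      have term2 : (∫⁻ s in Ioc 0 t, ENNReal.ofReal ((t - s) ^ a) * Φ s)
          ≤ ENNReal.ofReal (Cpq a (-γ)) * ENNReal.ofReal (K' * t ^ m') := by
        calc (∫⁻ s in Ioc 0 t, ENNReal.ofReal ((t - s) ^ a) * Φ s)
            = ∫⁻ s in Ioc 0 t, ∫⁻ r in Ioc 0 s,
                ENNReal.ofReal ((t - s) ^ a) * (ENNReal.ofReal ((s - r) ^ (-γ)) * g r) :=
              lintegral_congr fun s => (lintegral_const_mul' _ _ ENNReal.ofReal_ne_top).symm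
          _ = ∫⁻ r in Ioc 0 t, ∫⁻ s in Ioc r t,
                ENNReal.ofReal ((t - s) ^ a) * (ENNReal.ofReal ((s - r) ^ (-γ)) * g r) :=
              swapIoc hmker2
          _ ≤ ∫⁻ r in Ioc 0 t,
                ENNReal.ofReal (Cpq a (-γ)) * (ENNReal.ofReal ((t - r) ^ (a + -γ + 1)) * g r) := by
              apply lintegral_mono_ae
              filter_upwards [ae_restrict_mem measurableSet_Ioc] with r hr
              have hmf : Measurable fun s : ℝ => ENNReal.ofReal ((t - s) ^ a * (s - r) ^ (-γ)) :=
                (((measurable_const.sub measurable_id).pow measurable_const).mul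
                  ((measurable_id.sub measurable_const).pow measurable_const)).ennreal_ofReal
              have e0 : (∫⁻ s in Ioc r t,
                  ENNReal.ofReal ((t - s) ^ a) * (ENNReal.ofReal ((s - r) ^ (-γ)) * g r))
                  = ∫⁻ s in Ioc r t, g r * ENNReal.ofReal ((t - s) ^ a * (s - r) ^ (-γ)) := by
                apply setLIntegral_congr_fun_ae measurableSet_Ioc
                filter_upwards with s hs
                rw [ENNReal.ofReal_mul (Real.rpow_nonneg (by linarith [hs.2]) _)]
                ring
              have hJ : (∫⁻ s in Ioc r t, ENNReal.ofReal ((t - s) ^ a * (s - r) ^ (-γ)))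
                  ≤ ENNReal.ofReal (Cpq a (-γ) * (t - r) ^ (a + -γ + 1)) := by
                rcases lt_or_eq_of_le hr.2 with h | h
                · exact L1 ha hγ' h
                · rw [h]
                  simp
              calc (∫⁻ s in Ioc r t,
                  ENNReal.ofReal ((t - s) ^ a) * (ENNReal.ofReal ((s - r) ^ (-γ)) * g r))
                  = g r * ∫⁻ s in Ioc r t, ENNReal.ofReal ((t - s) ^ a * (s - r) ^ (-γ)) := by
                    rw [e0]; exact lintegral_const_mul _ hmf
                _ ≤ g r * ENNReal.ofReal (Cpq a (-γ) * (t - r) ^ (a + -γ + 1)) :=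
                    mul_le_mul_right hJ _
                _ = ENNReal.ofReal (Cpq a (-γ)) * (ENNReal.ofReal ((t - r) ^ (a + -γ + 1)) * g r) := by
                    rw [ENNReal.ofReal_mul hCg.le]; ring
          _ = ENNReal.ofReal (Cpq a (-γ))
                * ∫⁻ r in Ioc 0 t, ENNReal.ofReal ((t - r) ^ (a + -γ + 1)) * g r :=
              lintegral_const_mul' _ _ ENNReal.ofReal_ne_top
          _ ≤ ENNReal.ofReal (Cpq a (-γ)) * ENNReal.ofReal (K' * t ^ m') := by
              apply mul_le_mul_right
              have e : a + -γ + 1 = a' := by rw [ha'def]; ring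
              rw [e]
              exact hK' g hg hint hae t ht
      calc (∫⁻ s in Ioc 0 t, ENNReal.ofReal ((t - s) ^ a) * g s)
          ≤ (∫⁻ s in Ioc 0 t, ENNReal.ofReal ((t - s) ^ a) * ENNReal.ofReal (s ^ (-β)))
            + ∫⁻ s in Ioc 0 t, ENNReal.ofReal ((t - s) ^ a) * (ENNReal.ofReal C₂ * Φ s) := step1
        _ ≤ ENNReal.ofReal (Cpq a (-β) * t ^ (a + -β + 1))
            + ENNReal.ofReal C₂ * (ENNReal.ofReal (Cpq a (-γ)) * ENNReal.ofReal (K' * t ^ m')) := by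
            apply add_le_add term1
            have e3 : (∫⁻ s in Ioc 0 t, ENNReal.ofReal ((t - s) ^ a) * (ENNReal.ofReal C₂ * Φ s))
                = ENNReal.ofReal C₂ * ∫⁻ s in Ioc 0 t, ENNReal.ofReal ((t - s) ^ a) * Φ s := by
              rw [← lintegral_const_mul' _ _ ENNReal.ofReal_ne_top]
              exact lintegral_congr fun s => by ring
            rw [e3]
            exact mul_le_mul_right term2 _
        _ ≤ ENNReal.ofReal ((Cpq a (-β) * max 1 (T ^ (a + 1 - β - m))
              + C₂ * Cpq a (-γ) * K' * max 1 (T ^ (m' - m))) * t ^ m) := by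
            rw [← ENNReal.ofReal_mul hCg.le, ← ENNReal.ofReal_mul hC₂.le,
              ← ENNReal.ofReal_add (mul_nonneg hCb.le (Real.rpow_nonneg ht.1.le _))
                (mul_nonneg hC₂.le (mul_nonneg hCg.le
                  (mul_nonneg hK'pos.le (Real.rpow_nonneg ht.1.le _))))]
            apply ENNReal.ofReal_le_ofReal
            have c1 : t ^ (a + -β + 1) ≤ max 1 (T ^ (a + 1 - β - m)) * t ^ m := by
              have hc := rpow_cmp ht.1 ht.2 (show m ≤ a + -β + 1 by linarith [hmle])
              rw [show a + -β + 1 - m = a + 1 - β - m by ring] at hc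
              exact hc
            have c2 : t ^ m' ≤ max 1 (T ^ (m' - m)) * t ^ m := rpow_cmp ht.1 ht.2 hmm'
            have htm : (0:ℝ) ≤ t ^ m := (Real.rpow_pos_of_pos ht.1 m).le
            nlinarith [mul_le_mul_of_nonneg_left c1 hCb.le,
              mul_le_mul_of_nonneg_left c2
                (show (0:ℝ) ≤ C₂ * Cpq a (-γ) * K' by positivity)]

set_option maxHeartbeats 2000000 in
/-- Gronwall inequality of Volterra type. -/
theorem stmt5 (γ β T C₂ : ℝ) (hγ : γ ∈ Set.Ico (0 : ℝ) 1) (hβ : β ∈ Set.Ico (0 : ℝ) 1)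
    (hT : 0 < T) (hC₂ : 0 < C₂) :
    ∃ C₃ > 0, ∀ (C₁ : ℝ) (f : ℝ → ℝ), 0 < C₁ →
      IntegrableOn f (Set.Ioc 0 T) →
      (∀ t ∈ Set.Ioc (0 : ℝ) T, 0 ≤ f t) →
      (∀ t ∈ Set.Ioc (0 : ℝ) T,
        f t ≤ C₁ * t ^ (-β) + C₂ * ∫ s in (0 : ℝ)..t, (t - s) ^ (-γ) * f s) →
      ∀ t ∈ Set.Ioc (0 : ℝ) T, f t ≤ C₃ * C₁ * t ^ (-β) := by
  have hγ0 := hγ.1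
  have hγ1 := hγ.2
  have hβ0 := hβ.1
  have hβ1 := hβ.2
  have h1γ : (0:ℝ) < 1 - γ := by linarith
  obtain ⟨M, hM, hMprop⟩ := l1bound hγ hβ hT hC₂
  obtain ⟨k, hk⟩ := exists_nat_gt (γ / (1 - γ))
  have hγk : 0 < -γ + (k:ℝ) * (1 - γ) := by
    have h := (div_lt_iff₀ h1γ).mp hk
    linarith
  obtain ⟨K, hK, hKprop⟩ := bootstrap hγ hβ hT hC₂ hM k (-γ) (by linarith) hγk
  set m : ℝ := min 0 (-γ + 1 - β) with hmdef
  have hmβ : -β ≤ m := le_min (by linarith) (by linarith)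
  refine ⟨1 + C₂ * K * max 1 (T ^ (m + β)), by positivity, ?_⟩
  intro C₁ f hC₁ hint hpos hineq t ht
  set f₁ : ℝ → ℝ := fun s => f s / C₁ with hf₁def
  have hint₁ : IntegrableOn f₁ (Ioc 0 T) := hint.div_const C₁
  have hineq₁ : ∀ u ∈ Ioc (0:ℝ) T,
      f₁ u ≤ u ^ (-β) + C₂ * ∫ s in (0:ℝ)..u, (u - s) ^ (-γ) * f₁ s := by
    intro u hu
    have h := hineq u hu
    have e : (∫ s in (0:ℝ)..u, (u - s) ^ (-γ) * f₁ s)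
        = (∫ s in (0:ℝ)..u, (u - s) ^ (-γ) * f s) / C₁ := by
      rw [← intervalIntegral.integral_div]
      apply intervalIntegral.integral_congr
      intro s hs
      simp only [hf₁def]
      ring
    rw [e, hf₁def]
    rw [div_le_iff₀ hC₁]
    have e2 : (u ^ (-β) + C₂ * ((∫ s in (0:ℝ)..u, (u - s) ^ (-γ) * f s) / C₁)) * C₁
        = C₁ * u ^ (-β) + C₂ * ∫ s in (0:ℝ)..u, (u - s) ^ (-γ) * f s := by
      field_simp
    rw [e2]
    exact h
  have hf₁nn : ∀ᵐ s ∂(volume.restrict (Ioc 0 T)), 0 ≤ f₁ s := by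
    filter_upwards [ae_restrict_mem measurableSet_Ioc] with s hs
    exact div_nonneg (hpos s hs) hC₁.le
  have haem : AEMeasurable (fun s => ENNReal.ofReal (f₁ s)) (volume.restrict (Ioc 0 T)) :=
    hint₁.aemeasurable.ennreal_ofReal
  set g : ℝ → ℝ≥0∞ := haem.mk _ with hgdef
  have hgm : Measurable g := haem.measurable_mk
  have hgeq : (fun s => ENNReal.ofReal (f₁ s)) =ᵐ[volume.restrict (Ioc 0 T)] g := haem.ae_eq_mk
  have hgeq' : ∀ u ≤ T, (∫⁻ s in Ioc 0 u, ENNReal.ofReal ((u - s) ^ (-γ)) * ENNReal.ofReal (f₁ s))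
      = ∫⁻ s in Ioc 0 u, ENNReal.ofReal ((u - s) ^ (-γ)) * g s := by
    intro u hu
    apply lintegral_congr_ae
    have h := ae_restrict_of_ae_restrict_of_subset (Ioc_subset_Ioc_right hu) hgeq
    filter_upwards [h] with s hs
    rw [hs]
  have keyle : ∀ u ∈ Ioc (0:ℝ) T,
      ENNReal.ofReal (∫ s in (0:ℝ)..u, (u - s) ^ (-γ) * f₁ s)
        ≤ ∫⁻ s in Ioc 0 u, ENNReal.ofReal ((u - s) ^ (-γ)) * g s := by
    intro u hu
    rw [← hgeq' u hu.2, intervalIntegral.integral_of_le hu.1.le]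
    by_cases hi : IntegrableOn (fun s => (u - s) ^ (-γ) * f₁ s) (Ioc 0 u)
    · rw [ofReal_integral_eq_lintegral_ofReal hi ?_]
      · apply le_of_eq
        apply setLIntegral_congr_fun_ae measurableSet_Ioc
        filter_upwards with s hs
        rw [ENNReal.ofReal_mul (Real.rpow_nonneg (by linarith [hs.2]) _)]
      · have h := ae_restrict_of_ae_restrict_of_subset (Ioc_subset_Ioc_right hu.2) hf₁nn
        filter_upwards [h, ae_restrict_mem measurableSet_Ioc] with s hs1 hs2
        exact mul_nonneg (Real.rpow_nonneg (by linarith [hs2.2]) _) hs1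
    · rw [MeasureTheory.integral_undef hi]
      simp
  have hgae : ∀ᵐ u ∂(volume.restrict (Ioc 0 T)), g u ≤ ENNReal.ofReal (u ^ (-β))
      + ENNReal.ofReal C₂ * ∫⁻ s in Ioc 0 u, ENNReal.ofReal ((u - s) ^ (-γ)) * g s := by
    filter_upwards [hgeq, ae_restrict_mem measurableSet_Ioc] with u hgu hu
    rw [← hgu]
    calc ENNReal.ofReal (f₁ u)
        ≤ ENNReal.ofReal (u ^ (-β) + C₂ * ∫ s in (0:ℝ)..u, (u - s) ^ (-γ) * f₁ s) :=
          ENNReal.ofReal_le_ofReal (hineq₁ u hu)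
      _ ≤ ENNReal.ofReal (u ^ (-β))
          + ENNReal.ofReal (C₂ * ∫ s in (0:ℝ)..u, (u - s) ^ (-γ) * f₁ s) :=
          ENNReal.ofReal_add_le
      _ ≤ ENNReal.ofReal (u ^ (-β))
          + ENNReal.ofReal C₂ * ∫⁻ s in Ioc 0 u, ENNReal.ofReal ((u - s) ^ (-γ)) * g s := by
          apply add_le_add_right
          rw [ENNReal.ofReal_mul hC₂.le]
          exact mul_le_mul_right (keyle u hu) _
  have hfin : (∫⁻ s in Ioc 0 T, g s) < ⊤ := by
    rw [← lintegral_congr_ae hgeq]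
    exact (hasFiniteIntegral_iff_ofReal hf₁nn).mp hint₁.hasFiniteIntegral
  have hIbound := hMprop g hgm hfin hgae
  have hfinal := hKprop g hgm hIbound hgae t ht
  have hreal : (∫ s in (0:ℝ)..t, (t - s) ^ (-γ) * f s) ≤ C₁ * (K * t ^ m) := by
    have e : (∫ s in (0:ℝ)..t, (t - s) ^ (-γ) * f s)
        = C₁ * ∫ s in (0:ℝ)..t, (t - s) ^ (-γ) * f₁ s := by
      rw [← intervalIntegral.integral_const_mul]
      apply intervalIntegral.integral_congr
      intro s hs
      simp only [hf₁def]
      field_simp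
    rw [e]
    apply mul_le_mul_of_nonneg_left _ hC₁.le
    have h1 : ENNReal.ofReal (∫ s in (0:ℝ)..t, (t - s) ^ (-γ) * f₁ s)
        ≤ ENNReal.ofReal (K * t ^ m) := le_trans (keyle t ht) hfinal
    have hy : (0:ℝ) ≤ K * t ^ m := mul_nonneg hK.le (Real.rpow_nonneg ht.1.le _)
    rcases le_or_gt (∫ s in (0:ℝ)..t, (t - s) ^ (-γ) * f₁ s) 0 with h | h
    · linarith
    · exact (ENNReal.ofReal_le_ofReal_iff hy).mp h1
  have hmain := hineq t ht
  have hcmp : t ^ m ≤ max 1 (T ^ (m + β)) * t ^ (-β) := by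
    have hc := rpow_cmp ht.1 ht.2 hmβ
    rw [show m - -β = m + β by ring] at hc
    exact hc
  calc f t ≤ C₁ * t ^ (-β) + C₂ * ∫ s in (0:ℝ)..t, (t - s) ^ (-γ) * f s := hmain
    _ ≤ C₁ * t ^ (-β) + C₂ * (C₁ * (K * t ^ m)) :=
        add_le_add_right (mul_le_mul_of_nonneg_left hreal hC₂.le) _
    _ ≤ (1 + C₂ * K * max 1 (T ^ (m + β))) * C₁ * t ^ (-β) := by
        nlinarith [mul_le_mul_of_nonneg_left hcmp
          (show (0:ℝ) ≤ C₂ * C₁ * K by positivity)]
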